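/- Let R be a nonzero ring (not necessarily commutative and not necessarily with a multiplicative identity). Then the following are equivalent: (i) R is a finite field (there exists a two-sided multiplicative identity, multiplication is commutative, every nonzero element is invertible, and R is finite); (ii) every function g : R → R can be given by a polynomial with coefficients in R, i.e., there exist n ≥ 0 and a₀, a₁, …, aₙ ∈ R such that g(r) = a₀ + a₁r + … + aₙrⁿ for all r ∈ R; (iii) every bijection g : R → R can be given by a polynomial with coefficients in R in the same sense. -/

import Mathlib

/-- `nupow r k` is `r^(k+1)` in a non-unital ring: the (k+1)-fold product of `r`. -/
def nupow {R : Type*} [NonUnitalRing R] (r : R) : ℕ → R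
  | 0 => r
  | k + 1 => nupow r k * r

/-- A function `g : R → R` is given by a polynomial with coefficients in `R`:
`g r = a₀ + a₁ r + a₂ r² + ⋯ + aₙ rⁿ` for all `r`. -/
def IsPolyFun {R : Type*} [NonUnitalRing R] (g : R → R) : Prop :=
  ∃ n : ℕ, ∃ a : ℕ → R, ∀ r : R,
    g r = a 0 + ∑ i ∈ Finset.range n, a (i + 1) * nupow r i

section Aux

variable {R : Type*} [NonUnitalRing R]

lemma nupow_zero_left (i : ℕ) : nupow (0 : R) i = 0 := by
  induction i with
  | zero => rfl
  | succ k ih => simp [nupow, ih]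

lemma nupow_succ (r : R) (k : ℕ) : nupow r (k + 1) = nupow r k * r := rfl

/-- For a polynomial function `f` and any `r`, `f r - f 0` is a left multiple of `r`. -/
lemma poly_diff {f : R → R} (hf : IsPolyFun f) (r : R) : ∃ c : R, f r = f 0 + c * r := by
  obtain ⟨n, a, ha⟩ := hf
  have h0 : f 0 = a 0 := by
    rw [ha 0]
    simp [nupow_zero_left]
  refine ⟨∑ i ∈ Finset.range n,
      (fun j : ℕ => match j with
        | 0 => a 1
        | (k+1) => a (k+2) * nupow r k) i, ?_⟩
  rw [ha r, h0, Finset.sum_mul]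
  congr 1
  refine Finset.sum_congr rfl fun i _ => ?_
  match i with
  | 0 => rfl
  | (k+1) =>
    show a (k+2) * nupow r (k+1) = (a (k+2) * nupow r k) * r
    rw [nupow_succ, mul_assoc]

variable [Nontrivial R]

/-- From "every bijection is polynomial": every element is a left multiple of any nonzero
element. -/
lemma surj_step (h3 : ∀ g : R → R, Function.Bijective g → IsPolyFun g)
    {r : R} (hr : r ≠ 0) (x : R) : ∃ c : R, x = c * r := by
  classical
  by_contra hx
  push_neg at hx
  have hx0 : x ≠ 0 := fun h => hx 0 (by rw [h, zero_mul])
  by_cases hxr : x = r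
  · subst hxr
    obtain ⟨c, hc⟩ := poly_diff (h3 (Equiv.swap (0 : R) x) (Equiv.swap (0 : R) x).bijective) x
    rw [Equiv.swap_apply_right, Equiv.swap_apply_left] at hc
    -- hc : 0 = x + c * x
    have hx' : x = -(c * x) := eq_neg_of_add_eq_zero_left hc.symm
    refine hx (-c) ?_
    rw [neg_mul]
    exact hx' 
  · obtain ⟨c, hc⟩ := poly_diff (h3 (Equiv.swap x r) (Equiv.swap x r).bijective) r
    rw [Equiv.swap_apply_right,
      Equiv.swap_apply_of_ne_of_ne (Ne.symm hx0) (Ne.symm hr), zero_add] at hc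
    exact hx c hc

/-- From "every bijection is polynomial": `R` is finite. -/
lemma finite_step (h3 : ∀ g : R → R, Function.Bijective g → IsPolyFun g) : Finite R := by
  classical
  by_contra hfin
  rw [not_finite_iff_infinite] at hfin
  -- every bijection is in the range of a `List R`-indexed family of functions
  let F : List R → (R → R) := fun L r =>
    L.getD 0 0 + ∑ i ∈ Finset.range L.length, L.getD (i+1) 0 * nupow r i
  have hsur : ∀ g : R → R, Function.Bijective g → ∃ L : List R, F L = g := by
    intro g hg
    obtain ⟨n, a, ha⟩ := h3 g hg
    refine ⟨List.ofFn (fun i : Fin (n+1) => a i), ?_⟩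
    funext r
    have hlen : (List.ofFn (fun i : Fin (n+1) => a i)).length = n + 1 := List.length_ofFn
    have hget : ∀ i : ℕ, i < n + 1 → (List.ofFn (fun i : Fin (n+1) => a i)).getD i 0 = a i := by
      intro i hi
      rw [List.getD_eq_getElem _ _ (by rw [hlen]; exact hi), List.getElem_ofFn]
    have e2 : ∑ i ∈ Finset.range (List.ofFn (fun i : Fin (n+1) => a i)).length,
        (List.ofFn (fun i : Fin (n+1) => a i)).getD (i+1) 0 * nupow r i
        = ∑ i ∈ Finset.range n, a (i + 1) * nupow r i := by
      rw [hlen, Finset.sum_range_succ,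
        List.getD_eq_default (List.ofFn (fun i : Fin (n+1) => a i)) (0 : R) hlen.le,
        zero_mul, add_zero]
      exact Finset.sum_congr rfl fun i hi => by
        rw [hget (i+1) (by simpa using Finset.mem_range.mp hi)]
    show (List.ofFn (fun i : Fin (n+1) => a i)).getD 0 0
        + ∑ i ∈ Finset.range (List.ofFn (fun i : Fin (n+1) => a i)).length,
          (List.ofFn (fun i : Fin (n+1) => a i)).getD (i+1) 0 * nupow r i = g r
    rw [e2, hget 0 (Nat.succ_pos n), ha r]
  -- hence the bijections inject into `List R`
  have up : (Cardinal.mk {g : R → R // Function.Bijective g}) ≤ Cardinal.mk (List R) := by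
    have h := fun g : {g : R → R // Function.Bijective g} => hsur g.1 g.2
    choose φ hφ using h
    refine Cardinal.mk_le_of_injective (f := φ) fun g h hgh => ?_
    apply Subtype.ext
    rw [← hφ g, ← hφ h, hgh]
  -- but the powerset of `R` injects into the bijections
  obtain ⟨e⟩ : Nonempty ((R ⊕ R) ≃ R) := by
    refine Cardinal.eq.mp ?_
    rw [Cardinal.mk_sum, Cardinal.lift_id, Cardinal.add_eq_self (Cardinal.aleph0_le_mk R)]
  let σ : Set R → (R ⊕ R → R ⊕ R) := fun S z =>
    match z with
    | .inl x => if x ∈ S then .inr x else .inl x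
    | .inr x => if x ∈ S then .inl x else .inr x
  have hσ : ∀ S, Function.Involutive (σ S) := by
    intro S z
    rcases z with x | x <;> by_cases h : x ∈ S <;> simp [σ, h]
  let G : Set R → (R → R) := fun S => e ∘ σ S ∘ e.symm
  have hGbij : ∀ S, Function.Bijective (G S) :=
    fun S => e.bijective.comp ((hσ S).bijective.comp e.symm.bijective)
  have hGinj : Function.Injective G := by
    intro S T hST
    ext x
    have h1 : σ S (Sum.inl x) = σ T (Sum.inl x) := by
      have := congrArg (fun g : R → R => g (e (Sum.inl x))) hST
      simpa only [G, Function.comp_apply, Equiv.symm_apply_apply, EmbeddingLike.apply_eq_iff_eq]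
        using this
    by_cases hS : x ∈ S <;> by_cases hT : x ∈ T <;> simp_all [σ]
  have low : Cardinal.mk (Set R) ≤ (Cardinal.mk {g : R → R // Function.Bijective g}) :=
    Cardinal.mk_le_of_injective (f := fun S => (⟨G S, hGbij S⟩ : {g : R → R // Function.Bijective g}))
      (fun S T h => hGinj (congrArg Subtype.val h))
  have := (low.trans up)
  rw [Cardinal.mk_set, Cardinal.mk_list_eq_mk] at this
  exact absurd this (not_le.mpr (Cardinal.cantor _))

lemma step31 (h3 : ∀ g : R → R, Function.Bijective g → IsPolyFun g) :
    Finite R ∧ ∃ e : R, (∀ x : R, e * x = x ∧ x * e = x) ∧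
      (∀ x y : R, x * y = y * x) ∧ (∀ x : R, x ≠ 0 → ∃ y : R, x * y = e) := by
  classical
  have hfin : Finite R := finite_step h3
  have hsurj : ∀ {r : R}, r ≠ 0 → ∀ x : R, ∃ c : R, x = c * r := fun hr x => surj_step h3 hr x
  have hcancel : ∀ {r : R}, r ≠ 0 → ∀ a b : R, a * r = b * r → a = b := by
    intro r hr
    have hs : Function.Surjective (fun c : R => c * r) := by
      intro x
      obtain ⟨c, hc⟩ := hsurj hr x
      exact ⟨c, hc.symm⟩
    have hinj : Function.Injective (fun c : R => c * r) :=
      Finite.injective_iff_surjective.mpr hs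
    intro a b h
    exact hinj h
  obtain ⟨r0, hr0⟩ := exists_ne (0 : R)
  obtain ⟨e, he⟩ := hsurj hr0 r0
  have he0 : e ≠ 0 := by
    rintro rfl
    rw [zero_mul] at he
    exact hr0 he
  have hee : e * e = e := by
    refine hcancel hr0 _ _ ?_
    conv_lhs => rw [mul_assoc, ← he]
  have hre : ∀ y : R, y * e = y := by
    intro y
    refine hcancel he0 _ _ ?_
    rw [mul_assoc, hee]
  have hle : ∀ y : R, e * y = y := by
    intro y
    by_contra hne
    have h0 : e * y - y ≠ 0 := sub_ne_zero_of_ne hne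
    have ht : (e * y - y) * (e * y - y) = 0 := by
      rw [mul_sub, ← mul_assoc, hre (e*y - y), sub_self]
    exact h0 (hcancel h0 _ 0 (by rw [zero_mul]; exact ht))
  have hnzd : ∀ a b : R, a * b = 0 → a = 0 ∨ b = 0 := by
    intro a b hab
    by_cases hb : b = 0
    · exact Or.inr hb
    · exact Or.inl (hcancel hb a 0 (by rw [zero_mul]; exact hab))
  -- commutativity via Wedderburn
  letI ringR : Ring R :=
    { ‹NonUnitalRing R› with one := e, one_mul := hle, mul_one := hre }
  haveI : NoZeroDivisors R := ⟨fun {a b} hab => hnzd a b hab⟩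
  haveI : IsDomain R := NoZeroDivisors.to_isDomain R
  have hIsField := Finite.isDomain_to_isField R
  refine ⟨hfin, e, fun x => ⟨hle x, hre x⟩, hIsField.mul_comm, ?_⟩
  intro x hx
  obtain ⟨y, hy⟩ := hsurj hx e
  have hy0 : y ≠ 0 := by
    rintro rfl
    rw [zero_mul] at hy
    exact he0 hy
  obtain ⟨w, hw⟩ := hsurj hy0 e
  have hwx : w = x := by
    calc w = w * e := (hre w).symm
      _ = w * (y * x) := by rw [← hy]
      _ = (w * y) * x := by rw [mul_assoc]
      _ = e * x := by rw [← hw]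
      _ = x := hle x
  exact ⟨y, by rw [← hwx]; exact hw.symm⟩

lemma step12
    (h : Finite R ∧ ∃ e : R, (∀ x : R, e * x = x ∧ x * e = x) ∧
      (∀ x y : R, x * y = y * x) ∧ (∀ x : R, x ≠ 0 → ∃ y : R, x * y = e)) :
    ∀ g : R → R, IsPolyFun g := by
  classical
  obtain ⟨hfin, e, hid, hcomm, hinv⟩ := h
  letI : CommRing R :=
    { ‹NonUnitalRing R› with
      one := e
      one_mul := fun x => (hid x).1
      mul_one := fun x => (hid x).2
      mul_comm := hcomm }
  haveI : NoZeroDivisors R := ⟨by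
    intro a b hab
    by_cases ha : a = 0
    · exact Or.inl ha
    · obtain ⟨a', ha'⟩ := hinv a ha
      refine Or.inr ?_
      calc b = e * b := ((hid b).1).symm
        _ = (a' * a) * b := by rw [← ha', hcomm a a']
        _ = a' * (a * b) := by rw [mul_assoc]
        _ = 0 := by rw [hab, mul_zero]⟩
  haveI : IsDomain R := NoZeroDivisors.to_isDomain R
  letI := Fintype.ofFinite R
  letI : Field R := Fintype.fieldOfDomain R
  have hnupow : ∀ (r : R) (i : ℕ), nupow r i = r ^ (i + 1) := by
    intro r i
    induction i with
    | zero => rw [pow_one]; rfl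
    | succ k ih => rw [nupow_succ, ih, ← pow_succ]
  intro g
  set p := Lagrange.interpolate (Finset.univ : Finset R) id g with hpdef
  have hp : ∀ r : R, Polynomial.eval r p = g r := fun r =>
    Lagrange.eval_interpolate_at_node g (Set.injOn_id _) (Finset.mem_univ r)
  refine ⟨p.natDegree, fun i => p.coeff i, fun r => ?_⟩
  have key : Polynomial.eval r p
      = p.coeff 0 + ∑ i ∈ Finset.range p.natDegree, p.coeff (i+1) * nupow r i := by
    rw [Polynomial.eval_eq_sum_range, Finset.sum_range_succ', pow_zero, mul_one, add_comm]
    congr 1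
    exact Finset.sum_congr rfl fun i _ => by rw [hnupow, pow_succ]
  exact (hp r).symm.trans key

end Aux

/-- **Proposition 1.2.** For a nonzero (not necessarily commutative or unital) ring `R`,
the following are equivalent: (i) `R` is a finite field; (ii) every function on `R` is given
by a polynomial with coefficients in `R`; (iii) every bijection on `R` is given by a
polynomial with coefficients in `R`. -/
theorem stmt_1 {R : Type*} [NonUnitalRing R] [Nontrivial R] :
    List.TFAE
      [ (Finite R ∧ ∃ e : R, (∀ x : R, e * x = x ∧ x * e = x) ∧
          (∀ x y : R, x * y = y * x) ∧ (∀ x : R, x ≠ 0 → ∃ y : R, x * y = e)),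
        (∀ g : R → R, IsPolyFun g),
        (∀ g : R → R, Function.Bijective g → IsPolyFun g) ] := by
  tfae_have 1 → 2 := step12
  tfae_have 2 → 3 := fun h g _ => h g
  tfae_have 3 → 1 := step31
  tfae_finish
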